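/- Let ε > 0, 0 < γ ≤ 2ε, E₀ > 0 and β = 0. Then the functions E₁(t) = E₂(t) = ½E₀ e^{−γt} together with the constant phase ψ(t) ≡ −arcsin(γ/(2ε)) form an exact solution of the two-site energy-phase system with β = 0 on all of ℝ; the same is true with the constant phase ψ(t) ≡ −π + arcsin(γ/(2ε)). -/
import Mathlib


/-- `(E₁, E₂, ψ)` is an exact solution (on all of `ℝ`) of the two-site
energy-phase system with parameters `ε, γ, β`. -/
def IsTwoSiteSolution (ε γ β : ℝ) (E1 E2 ψ : ℝ → ℝ) : Prop :=
  ∀ t : ℝ,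
    HasDerivAt E1 (2 * ε * Real.sqrt (E1 t * E2 t) * Real.sin (ψ t) + 2 * β * E1 t) t ∧
    HasDerivAt E2 (-(2 * ε * Real.sqrt (E1 t * E2 t) * Real.sin (ψ t)) - 2 * γ * E2 t) t ∧
    HasDerivAt ψ (2 * (E2 t - E1 t) *
      (1 + ε * Real.cos (ψ t) / (2 * Real.sqrt (E1 t * E2 t)))) t

lemma key (ε γ E₀ : ℝ) (hε : 0 < ε) (hE₀ : 0 < E₀) (c : ℝ)
    (hc : Real.sin c = -(γ / (2 * ε))) :
    IsTwoSiteSolution ε γ 0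
      (fun t => (1 / 2) * E₀ * Real.exp (-γ * t))
      (fun t => (1 / 2) * E₀ * Real.exp (-γ * t))
      (fun _ => c) := by
  intro t
  have hEpos : 0 < (1 / 2) * E₀ * Real.exp (-γ * t) := by positivity
  have hsqrt : Real.sqrt (((1 / 2) * E₀ * Real.exp (-γ * t)) *
      ((1 / 2) * E₀ * Real.exp (-γ * t))) = (1 / 2) * E₀ * Real.exp (-γ * t) :=
    Real.sqrt_mul_self hEpos.le
  have hd : HasDerivAt (fun t => (1 / 2) * E₀ * Real.exp (-γ * t))
      ((1 / 2) * E₀ * (Real.exp (-γ * t) * (-γ * 1))) t :=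
    (((hasDerivAt_id t).const_mul (-γ)).exp).const_mul _
  refine ⟨?_, ?_, ?_⟩
  · convert hd using 1
    simp only [hsqrt, hc]
    field_simp
    ring
  · convert hd using 1
    simp only [hsqrt, hc]
    field_simp
    ring
  · simp only [sub_self, zero_mul, mul_zero]
    exact hasDerivAt_const t c

/-- The exponentially decaying equal-energy solutions with constant phase
`ψ ≡ −arcsin(γ/(2ε))` or `ψ ≡ −π + arcsin(γ/(2ε))` of the damped (`β = 0`)
two-site system. -/
theorem stmt_14 (ε γ E₀ : ℝ) (hε : 0 < ε) (hγ : 0 < γ) (hγε : γ ≤ 2 * ε)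
    (hE₀ : 0 < E₀) :
    IsTwoSiteSolution ε γ 0
      (fun t => (1 / 2) * E₀ * Real.exp (-γ * t))
      (fun t => (1 / 2) * E₀ * Real.exp (-γ * t))
      (fun _ => -Real.arcsin (γ / (2 * ε))) ∧
    IsTwoSiteSolution ε γ 0
      (fun t => (1 / 2) * E₀ * Real.exp (-γ * t))
      (fun t => (1 / 2) * E₀ * Real.exp (-γ * t))
      (fun _ => -Real.pi + Real.arcsin (γ / (2 * ε))) := by
  have hmem : γ / (2 * ε) ∈ Set.Icc (-1 : ℝ) 1 := by
    constructor
    · linarith [div_nonneg hγ.le (by linarith : (0:ℝ) ≤ 2 * ε)]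
    · rw [div_le_one (by linarith)]; exact hγε
  have h1 : Real.sin (-Real.arcsin (γ / (2 * ε))) = -(γ / (2 * ε)) := by
    rw [Real.sin_neg, Real.sin_arcsin hmem.1 hmem.2]
  have h2 : Real.sin (-Real.pi + Real.arcsin (γ / (2 * ε))) = -(γ / (2 * ε)) := by
    rw [show -Real.pi + Real.arcsin (γ / (2 * ε)) =
      -(Real.pi - Real.arcsin (γ / (2 * ε))) by ring, Real.sin_neg,
      Real.sin_pi_sub, Real.sin_arcsin hmem.1 hmem.2]
  exact ⟨key ε γ E₀ hε hE₀ _ h1, key ε γ E₀ hε hE₀ _ h2⟩
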